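/- Let v : [0,∞) → ℝ be differentiable with v(t) ≤ 0 for all t, v integrable on [0,∞), v(t) → 0 as t → ∞, and v'(t) ≥ −v(t)² for all t. Then there exists M ≥ 0 such that |v(t)| ≤ M/t for all t > 0. -/

import Mathlib

open Real Set Filter MeasureTheory Topology

theorem stmt3 (v v' : ℝ → ℝ)
    (hd : ∀ t ∈ Ici (0:ℝ), HasDerivAt v (v' t) t)
    (hnp : ∀ t ∈ Ici (0:ℝ), v t ≤ 0)
    (hint : IntegrableOn (fun t => |v t|) (Ici 0))
    (hlim : Tendsto v atTop (nhds 0))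
    (hineq : ∀ t ∈ Ici (0:ℝ), -(v t)^2 ≤ v' t) :
    ∃ M ≥ (0:ℝ), ∀ t > (0:ℝ), |v t| ≤ M / t := by
  classical
  set w : ℝ → ℝ := (Ici (0:ℝ)).indicator (fun s => |v s|) with hw
  have hw_int : Integrable w := hint.integrable_indicator measurableSet_Ici
  have hw_nonneg : ∀ s, 0 ≤ w s := by
    intro s
    by_cases hs : s ∈ Ici (0:ℝ) <;> simp [hw, Set.indicator_apply, hs, abs_nonneg]
  set I : ℝ := ∫ s in Ici (0:ℝ), |v s| with hI
  have hI0 : 0 ≤ I := setIntegral_nonneg measurableSet_Ici fun s _ => abs_nonneg _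
  set g : ℝ → ℝ := fun x => 1 + x * (-v x) with hg
  have hgpos : ∀ x ∈ Ici (0:ℝ), 0 < g x := by
    intro x hx
    have h1 := hnp x hx
    have h2 : (0:ℝ) ≤ x := hx
    have : g x = 1 + x * -v x := rfl
    rw [this]
    nlinarith
  set ψ : ℝ → ℝ := fun x => ∫ s in (0:ℝ)..x, w s with hψdef
  have hψ_cont : Continuous ψ :=
    intervalIntegral.continuous_primitive (fun a b => hw_int.intervalIntegrable) 0
  set h : ℝ → ℝ := fun x => Real.log (g x) - ψ x with hh
  -- derivative of g
  have hgderiv : ∀ x ∈ Ici (0:ℝ), HasDerivAt g (-v x - x * v' x) x := by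
    intro x hx
    have h1 : HasDerivAt (fun y => y * (-v y)) (1 * (-v x) + x * (-(v' x))) x :=
      (hasDerivAt_id x).mul (hd x hx).neg
    have h2 := (hasDerivAt_const x (1:ℝ)).add h1
    rw [show (-v x - x * v' x) = 0 + (1 * (-v x) + x * (-(v' x))) by ring]
    exact h2
  -- derivative of ψ on Ioi 0
  have hψderiv : ∀ x ∈ Ioi (0:ℝ), HasDerivAt ψ (|v x|) x := by
    intro x hx
    have hca : ContinuousAt w x := by
      have hev : ∀ᶠ y in 𝓝 x, w y = |v y| := by
        filter_upwards [Ioi_mem_nhds hx] with y hy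
        simp [hw, Set.indicator_apply, (mem_Ioi.mp hy).le]
      have hvca : ContinuousAt (fun y => |v y|) x :=
        ((hd x (mem_Ioi.mp hx).le).continuousAt).abs
      exact hvca.congr (Filter.eventuallyEq_of_mem (Ioi_mem_nhds hx)
        (fun y hy => by simp [hw, Set.indicator_apply, (mem_Ioi.mp hy).le])).symm
    have hD : HasDerivAt ψ (w x) x :=
      intervalIntegral.integral_hasDerivAt_right hw_int.intervalIntegrable
        (hw_int.aestronglyMeasurable.stronglyMeasurableAtFilter) hca
    have : w x = |v x| := by simp [hw, Set.indicator_apply, (mem_Ioi.mp hx).le]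
    rwa [this] at hD
  -- h is continuous on Ici 0
  have hg_contOn : ContinuousOn g (Ici 0) := by
    intro x hx
    exact (((hasDerivAt_const x (1:ℝ)).add ((hasDerivAt_id x).mul
      (hd x hx).neg)).continuousAt).continuousWithinAt
  have hh_contOn : ContinuousOn h (Ici 0) := by
    apply ContinuousOn.sub
    · exact ContinuousOn.log hg_contOn fun x hx => ne_of_gt (hgpos x hx)
    · exact hψ_cont.continuousOn
  -- derivative of h is nonpositive on interior
  have hhderiv : ∀ x ∈ Ioi (0:ℝ), HasDerivAt h ((-v x - x * v' x) / g x - |v x|) x := by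
    intro x hx
    have hlog : HasDerivAt (fun y => Real.log (g y)) ((-v x - x * v' x) / g x) x :=
      (hgderiv x (mem_Ioi.mp hx).le).log (ne_of_gt (hgpos x (mem_Ioi.mp hx).le))
    exact hlog.sub (hψderiv x hx)
  have hDnonpos : ∀ x ∈ Ioi (0:ℝ), (-v x - x * v' x) / g x - |v x| ≤ 0 := by
    intro x hx
    have hx0 : (0:ℝ) ≤ x := le_of_lt hx
    have hv := hnp x hx0
    have hvi := hineq x hx0
    have habs : |v x| = -v x := abs_of_nonpos hv
    have hgp := hgpos x hx0
    rw [habs, sub_nonpos, div_le_iff₀ hgp]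
    have h3 : x * (-(v x)^2) ≤ x * v' x := mul_le_mul_of_nonneg_left hvi hx0
    have hgx : g x = 1 + x * -v x := rfl
    rw [hgx]
    nlinarith
  -- h is antitone on Ici 0
  have hanti : AntitoneOn h (Ici 0) := by
    apply antitoneOn_of_deriv_nonpos (convex_Ici 0) hh_contOn
    · intro x hx
      rw [interior_Ici] at hx
      exact (hhderiv x hx).differentiableAt.differentiableWithinAt
    · intro x hx
      rw [interior_Ici] at hx
      rw [(hhderiv x hx).deriv]
      exact hDnonpos x hx
  have hh0 : h 0 = 0 := by simp [hh, hg, hψdef]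
  -- ψ is bounded by I
  have hψ_le : ∀ t, 0 ≤ t → ψ t ≤ I := by
    intro t ht
    have h1 : ψ t = ∫ s in Ioc (0:ℝ) t, w s := by
      rw [hψdef]
      simp [intervalIntegral.integral_of_le ht]
    rw [h1, hI]
    have h2 : ∫ s in Ioc (0:ℝ) t, w s = ∫ s in Ioc (0:ℝ) t, |v s| := by
      apply setIntegral_congr_fun measurableSet_Ioc
      intro s hs
      simp [hw, Set.indicator_apply, le_of_lt hs.1]
    rw [h2]
    apply setIntegral_mono_set hint
    · filter_upwards with s using abs_nonneg _
    · exact HasSubset.Subset.eventuallyLE (fun s hs => le_of_lt hs.1)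
  refine ⟨Real.exp I - 1, by simpa using Real.one_le_exp hI0, ?_⟩
  intro t ht
  have ht0 : (0:ℝ) ≤ t := le_of_lt ht
  have hht : h t ≤ 0 := by
    rw [← hh0]
    exact hanti (by simp) ht0 ht0
  have hlogle : Real.log (g t) ≤ I := by
    have : Real.log (g t) - ψ t ≤ 0 := hht
    linarith [hψ_le t ht0]
  have hgle : g t ≤ Real.exp I := by
    have := Real.exp_le_exp.mpr hlogle
    rwa [Real.exp_log (hgpos t ht0)] at this
  have habs : |v t| = -v t := abs_of_nonpos (hnp t ht0)
  rw [habs, le_div_iff₀ ht]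
  have : t * (-v t) ≤ Real.exp I - 1 := by
    have : 1 + t * (-v t) ≤ Real.exp I := hgle
    linarith
  linarith [this]
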